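/- Let A be the n-by-n weighted shift matrix with weights a_1, …, a_{n−1}, 0, where all a_i are strictly positive real numbers. If U is an n-by-n complex matrix such that A^k·U = U·A^k and (A*)^k·U = U·(A*)^k for every integer k ≥ 0, then U = α·I_n for some complex number α. -/

import Mathlib

open Matrix

/-- The n-by-n weighted shift matrix with weights `a 0, …, a (n-1)`
(representing `a_1, …, a_n`): the `(i, i+1)` entry is `a i` (cyclically). -/
def wsMatrix {n : ℕ} (a : Fin n → ℂ) : Matrix (Fin n) (Fin n) ℂ :=
  fun i j => if (j : ℕ) = ((i : ℕ) + 1) % n then a i else 0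

/-- Two square complex matrices are unitarily equivalent if `B = U* A U`
for some unitary `U`. -/
def UnitarilyEquiv {n : ℕ} (A B : Matrix (Fin n) (Fin n) ℂ) : Prop :=
  ∃ U : Matrix (Fin n) (Fin n) ℂ, U ∈ Matrix.unitaryGroup (Fin n) ℂ ∧ B = Uᴴ * A * U

lemma ws_val_add_one {n : ℕ} [NeZero n] (i : Fin n) :
    ((i + 1 : Fin n) : ℕ) = ((i : ℕ) + 1) % n := by
  rw [Fin.val_add, Fin.val_one']
  conv_rhs => rw [Nat.add_mod, Nat.mod_eq_of_lt i.isLt]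

lemma ws_cond_iff {n : ℕ} [NeZero n] (i k : Fin n) :
    ((k : ℕ) = ((i : ℕ) + 1) % n) ↔ k = i + 1 := by
  rw [Fin.ext_iff, ws_val_add_one]

lemma mul_ws_left {n : ℕ} [NeZero n] (b : Fin n → ℂ) (W : Matrix (Fin n) (Fin n) ℂ)
    (i j : Fin n) : (wsMatrix b * W) i j = b i * W (i + 1) j := by
  rw [Matrix.mul_apply]
  have : ∀ k : Fin n, wsMatrix b i k * W k j
      = if k = i + 1 then b i * W k j else 0 := by
    intro k
    simp only [wsMatrix, ws_cond_iff]
    split <;> simp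
  simp_rw [this]
  simp

lemma mul_ws_right {n : ℕ} [NeZero n] (b : Fin n → ℂ) (W : Matrix (Fin n) (Fin n) ℂ)
    (i j : Fin n) : (W * wsMatrix b) i j = W i (j - 1) * b (j - 1) := by
  rw [Matrix.mul_apply]
  have : ∀ k : Fin n, W i k * wsMatrix b k j
      = if k = j - 1 then W i k * b k else 0 := by
    intro k
    simp only [wsMatrix, ws_cond_iff]
    by_cases h : k = j - 1
    · subst h
      simp [sub_add_cancel]
    · have h2 : ¬ (j = k + 1) := fun hc => h (by rw [hc]; abel)
      simp [h, h2]
  simp_rw [this]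
  simp

lemma mul_wsH_left {n : ℕ} [NeZero n] (b : Fin n → ℂ) (W : Matrix (Fin n) (Fin n) ℂ)
    (i j : Fin n) :
    ((wsMatrix b)ᴴ * W) i j = (starRingEnd ℂ) (b (i - 1)) * W (i - 1) j := by
  rw [Matrix.mul_apply]
  have : ∀ k : Fin n, (wsMatrix b)ᴴ i k * W k j
      = if k = i - 1 then (starRingEnd ℂ) (b k) * W k j else 0 := by
    intro k
    simp only [Matrix.conjTranspose_apply, wsMatrix, ws_cond_iff]
    by_cases h : k = i - 1
    · subst h
      simp [sub_add_cancel]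
    · have h2 : ¬ (i = k + 1) := fun hc => h (by rw [hc]; abel)
      simp [h, h2]
  simp_rw [this]
  simp

lemma mul_wsH_right {n : ℕ} [NeZero n] (b : Fin n → ℂ) (W : Matrix (Fin n) (Fin n) ℂ)
    (i j : Fin n) :
    (W * (wsMatrix b)ᴴ) i j = W i (j + 1) * (starRingEnd ℂ) (b j) := by
  rw [Matrix.mul_apply]
  have : ∀ k : Fin n, W i k * (wsMatrix b)ᴴ k j
      = if k = j + 1 then W i k * (starRingEnd ℂ) (b j) else 0 := by
    intro k
    simp only [Matrix.conjTranspose_apply, wsMatrix, ws_cond_iff]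
    split <;> simp
  simp_rw [this]
  simp

lemma ws_sub_one_val {n : ℕ} [NeZero n] (hn : 2 ≤ n) (i : Fin n) :
    ((i - 1 : Fin n) : ℕ) = if (i : ℕ) = 0 then n - 1 else (i : ℕ) - 1 := by
  have h1 : ((1 : Fin n) : ℕ) = 1 := by rw [Fin.val_one']; exact Nat.mod_eq_of_lt (by omega)
  rw [Fin.sub_def]
  simp only [h1]
  by_cases h : (i : ℕ) = 0
  · rw [h, if_pos rfl, Nat.add_zero, Nat.mod_eq_of_lt (by omega)]
  · rw [if_neg h]
    have hi := i.isLt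
    have h3 : (n - 1 + (i : ℕ)) = ((i : ℕ) - 1) + n := by omega
    rw [h3, Nat.add_mod_right, Nat.mod_eq_of_lt (by omega)]

theorem stmt9 (n : ℕ) (hn : 2 ≤ n)
    (a : Fin n → ℝ)
    (ha : ∀ i : Fin n, (i : ℕ) + 1 < n → 0 < a i)
    (A : Matrix (Fin n) (Fin n) ℂ)
    (hA : A = wsMatrix fun i => if (i : ℕ) + 1 < n then (a i : ℂ) else 0)
    (U : Matrix (Fin n) (Fin n) ℂ)
    (hU1 : ∀ k : ℕ, A ^ k * U = U * A ^ k)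
    (hU2 : ∀ k : ℕ, Aᴴ ^ k * U = U * Aᴴ ^ k) :
    ∃ α : ℂ, U = α • (1 : Matrix (Fin n) (Fin n) ℂ) := by
  haveI : NeZero n := ⟨by omega⟩
  set b : Fin n → ℂ := (fun i => if (i : ℕ) + 1 < n then (a i : ℂ) else 0) with hb
  subst hA
  have hbne : ∀ i : Fin n, (i : ℕ) + 1 < n → b i ≠ 0 := by
    intro i hi
    simp only [hb, if_pos hi, ne_eq, Complex.ofReal_eq_zero]
    exact (ha i hi).ne'
  have hbz : ∀ i : Fin n, ¬ ((i : ℕ) + 1 < n) → b i = 0 := by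
    intro i hi; simp [hb, if_neg hi]
  have key1 := hU1 1
  have key2 := hU2 1
  simp only [pow_one] at key1 key2
  have E1 : ∀ i j : Fin n, b i * U (i + 1) j = U i (j - 1) * b (j - 1) := by
    intro i j
    have := congrFun (congrFun key1 i) j
    rwa [mul_ws_left, mul_ws_right] at this
  have E2 : ∀ i j : Fin n,
      (starRingEnd ℂ) (b (i - 1)) * U (i - 1) j = U i (j + 1) * (starRingEnd ℂ) (b j) := by
    intro i j
    have := congrFun (congrFun key2 i) j
    rwa [mul_wsH_left, mul_wsH_right] at this
  -- column induction
  have col : ∀ m : ℕ, ∀ j : Fin n, (j : ℕ) = m →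
      ∀ i : Fin n, U i j = if i = j then U 0 0 else 0 := by
    intro m
    induction m with
    | zero =>
      intro j hj i
      have hj0 : j = 0 := by
        ext; simpa using hj
      subst hj0
      by_cases hi : i = 0
      · simp [hi]
      · rw [if_neg hi]
        -- use E1 at (i - 1, 0)
        have h := E1 (i - 1) 0
        have hlast : b (0 - 1 : Fin n) = 0 := by
          apply hbz
          have h0 : ((0 - 1 : Fin n) : ℕ) = n - 1 := by
            rw [ws_sub_one_val hn]; simp
          omega
        rw [hlast, mul_zero] at h
        have hsucc : i - 1 + 1 = i := by abel
        rw [hsucc] at h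
        have hne : b (i - 1) ≠ 0 := by
          apply hbne
          have hi1 : 1 ≤ (i : ℕ) := by
            by_contra hc
            exact hi (by ext; omega)
          have h4 : ((i - 1 : Fin n) : ℕ) = (i : ℕ) - 1 := by
            rw [ws_sub_one_val hn, if_neg (by omega)]
          omega
        exact (mul_eq_zero.mp h).resolve_left hne
    | succ m ih =>
      intro j hj i
      have hm : m < n := by omega
      set j' : Fin n := j - 1 with hj'
      have hj'v : (j' : ℕ) = m := by
        have h5 : ((j - 1 : Fin n) : ℕ) = (j : ℕ) - 1 := by
          rw [ws_sub_one_val hn, if_neg (by omega)]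
        omega
      have hjj : j = j' + 1 := by rw [hj']; abel
      have hbj' : b j' ≠ 0 := hbne j' (by omega)
      have h := E2 i j'
      rw [← hjj] at h
      by_cases hij : i = j
      · have : i - 1 = j' := by rw [hij, hjj]; abel
        rw [this, ih j' hj'v j'] at h
        rw [if_pos rfl] at h
        rw [if_pos hij]
        have hc : (starRingEnd ℂ) (b j') ≠ 0 := by simpa using hbj'
        have h' : U i j * (starRingEnd ℂ) (b j') = U 0 0 * (starRingEnd ℂ) (b j') := by
          rw [← h]; ring
        exact mul_right_cancel₀ hc h' 
      · rw [if_neg hij]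
        have hne' : i - 1 ≠ j' := by
          intro hc
          apply hij
          rw [hjj, ← hc]; abel
        rw [ih j' hj'v (i - 1), if_neg hne', mul_zero] at h
        have := h.symm
        rcases mul_eq_zero.mp this with h1 | h2
        · exact h1
        · exact absurd h2 (by simpa using hbj')
  refine ⟨U 0 0, ?_⟩
  ext i j
  rw [Matrix.smul_apply, Matrix.one_apply, col (j : ℕ) j rfl i]
  split <;> simp
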